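/- arXiv:2405.01178 — 2 statements merged into one kernel-verified Lean document; each statement's English description precedes it below -/
import Mathlib

section
/- Under stability, a weak until is a strong until or a persistent property: let w be a word, φ, ψ pLTL formulae, and t a time such that (w,t) ⊨ G(φ W ψ) whenever (w,t) ⊨ F G(φ W ψ). Then (w, t) ⊨ φ W ψ if and only if (w, t) ⊨ φ U ψ or (w, t) ⊨ F G(φ W ψ). -/
inductive PLTL (AP : Type) : Type
  | tt : PLTL AP
  | ff : PLTL AP
  | atom (p : AP) : PLTL AP
  | not (φ : PLTL AP) : PLTL AP
  | and (φ ψ : PLTL AP) : PLTL AP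
  | or (φ ψ : PLTL AP) : PLTL AP
  | next (φ : PLTL AP) : PLTL AP
  | untl (φ ψ : PLTL AP) : PLTL AP
  | yest (φ : PLTL AP) : PLTL AP
  | since (φ ψ : PLTL AP) : PLTL AP

def Word (AP : Type) := ℕ → Set AP

def Sat {AP : Type} (w : Word AP) : PLTL AP → ℕ → Prop
  | .tt, _ => True
  | .ff, _ => False
  | .atom p, t => p ∈ w t
  | .not φ, t => ¬ Sat w φ t
  | .and φ ψ, t => Sat w φ t ∧ Sat w ψ t
  | .or φ ψ, t => Sat w φ t ∨ Sat w ψ t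
  | .next φ, t => Sat w φ (t + 1)
  | .untl φ ψ, t => ∃ r, t ≤ r ∧ Sat w ψ r ∧ ∀ s, t ≤ s → s < r → Sat w φ s
  | .yest φ, t => 0 < t ∧ Sat w φ (t - 1)
  | .since φ ψ, t => ∃ r, r ≤ t ∧ Sat w ψ r ∧ ∀ s, r < s → s ≤ t → Sat w φ s

/-- Weak yesterday: `W̃Y φ := Y φ ∨ ¬ Y ⊤`. -/
def PLTL.wyest {AP : Type} (φ : PLTL AP) : PLTL AP :=
  .or (.yest φ) (.not (.yest .tt))

/-- Historically: `H φ := ¬(⊤ S ¬φ)`. -/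
def PLTL.hist {AP : Type} (φ : PLTL AP) : PLTL AP :=
  .not (.since .tt (.not φ))

/-- Weak since: `φ S̃ ψ := (φ S ψ) ∨ H φ`. -/
def PLTL.wsince {AP : Type} (φ ψ : PLTL AP) : PLTL AP :=
  .or (.since φ ψ) (.hist φ)

/-- Eventually: `F φ := ⊤ U φ`. -/
def PLTL.ev {AP : Type} (φ : PLTL AP) : PLTL AP := .untl .tt φ

/-- Always: `G φ := ¬ F ¬ φ`. -/
def PLTL.alw {AP : Type} (φ : PLTL AP) : PLTL AP := .not (.ev (.not φ))

/-- Weak until: `φ W ψ := (φ U ψ) ∨ G φ`. -/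
def PLTL.wuntl {AP : Type} (φ ψ : PLTL AP) : PLTL AP :=
  .or (.untl φ ψ) (.alw φ)

/-- The suffix `w₁` of a word: `w₁ t = w (t + 1)`. -/
def Word.suffix1 {AP : Type} (w : Word AP) : Word AP := fun t => w (t + 1)

theorem weak_until_iff_under_stability {AP : Type} (φ ψ : PLTL AP) (w : Word AP) (t : ℕ)
    (hstab : Sat w (PLTL.ev (PLTL.alw (PLTL.wuntl φ ψ))) t →
      Sat w (PLTL.alw (PLTL.wuntl φ ψ)) t) :
    Sat w (PLTL.wuntl φ ψ) t ↔
      Sat w (.untl φ ψ) t ∨ Sat w (PLTL.ev (PLTL.alw (PLTL.wuntl φ ψ))) t := by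
  have halw : ∀ (ξ : PLTL AP) (s : ℕ), Sat w (PLTL.alw ξ) s ↔ ∀ r, s ≤ r → Sat w ξ r := by
    intro ξ s
    simp only [PLTL.alw, PLTL.ev, Sat]
    constructor
    · intro h r hr
      by_contra hc
      exact h ⟨r, hr, hc, fun _ _ _ => trivial⟩
    · rintro h ⟨r, hr, hc, -⟩
      exact hc (h r hr)
  constructor
  · rintro (h | h)
    · exact Or.inl h
    · right
      refine ⟨t, le_refl t, ?_, fun _ _ _ => trivial⟩
      rw [halw]
      intro r hr
      right
      rw [halw] at h ⊢
      intro s hs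
      exact h s (le_trans hr hs)
  · rintro (h | h)
    · exact Or.inl h
    · have := hstab h
      rw [halw] at this
      exact this t (le_refl t)
end

section
/- Rewriting Until to Weak Until is sound when the Until occurs infinitely often: for all pLTL formulae φ, ψ, words w, and times t, if (w, 0) ⊨ G F(φ U ψ) and (w, t) ⊨ φ W ψ, then (w, t) ⊨ φ U ψ. -/
theorem weak_until_to_until_of_GF {AP : Type} (φ ψ : PLTL AP) (w : Word AP) (t : ℕ)
    (hGF : Sat w (PLTL.alw (PLTL.ev (.untl φ ψ))) 0)
    (h : Sat w (PLTL.wuntl φ ψ) t) :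
    Sat w (.untl φ ψ) t := by
  rcases h with hU | hG
  · exact hU
  · -- G φ at t: φ holds at all s ≥ t
    have hφ : ∀ s, t ≤ s → Sat w φ s := by
      intro s hs
      by_contra hns
      exact hG ⟨s, hs, hns, fun _ _ _ => trivial⟩
    -- GF gives an until at time t
    have hF : Sat w (PLTL.ev (.untl φ ψ)) t := by
      by_contra hn
      exact hGF ⟨t, Nat.zero_le t, hn, fun _ _ _ => trivial⟩
    obtain ⟨r, htr, hU, _⟩ := hF
    obtain ⟨r', hrr', hr', _⟩ := hU
    exact ⟨r', le_trans htr hrr', hr', fun s hs _ => hφ s hs⟩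
end
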